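/- Let (h, *) be a right Post-Lie algebra over a field K of characteristic zero, (A₊, ·) a (not necessarily unital) associative K-algebra endowed with a bilinear map ⊳ : A₊ × A₊ → A₊, and φ : h → A₊ a linear map such that for all x, y ∈ h: φ([x,y]) = φ(x)·φ(y) − φ(y)·φ(x) and φ(x*y) = φ(x) ⊳ φ(y). Let A = K·1 ⊕ A₊ be the unitalization, with ⊳ extended by 1 ⊳ x = 0 and x ⊳ 1 = x for x ∈ A₊, and 1 ⊳ 1 = 1. Assume that for all x, y in the subalgebra of A₊ generated by φ(h) and all z ∈ φ(h): (x·y) ⊳ z = (x ⊳ z)·y + x·(y ⊳ z) and x ⊳ (y·z) = (x ⊳ y) ⊳ z − x ⊳ (y ⊳ z). Then there exists a unique algebra morphism Φ : U(h) → A extending φ, and this Φ satisfies, for all f, g, h ∈ U(h): Φ(f*g) = Φ(f) ⊳ Φ(g); (Φ(f)·Φ(g)) ⊳ Φ(h) = (Φ(f) ⊳ Φ(h⁽¹⁾))·(Φ(g) ⊳ Φ(h⁽²⁾)); and (Φ(f) ⊳ Φ(g)) ⊳ Φ(h) = Φ(f) ⊳ ((Φ(g) ⊳ Φ(h⁽¹⁾))·Φ(h⁽²⁾)),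 where * on U(h) is the unique extension of the Post-Lie product and Δ(h) = h⁽¹⁾ ⊗ h⁽²⁾ is the standard coproduct of U(h). -/

import Mathlib

open TensorProduct

/-- `(L, ⁅·,·⁆, m)` is a right Post-Lie algebra. -/
def IsRightPostLie (K : Type*) {L : Type*} [Field K] [LieRing L] [LieAlgebra K L]
    (m : L →ₗ[K] L →ₗ[K] L) : Prop :=
  (∀ x y z : L, m x ⁅y, z⁆
      = (m (m x y) z - m x (m y z)) - (m (m x z) y - m x (m z y)))
  ∧ (∀ x y z : L, m ⁅x, y⁆ z = ⁅m x z, y⁆ + ⁅x, m y z⁆)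


/-- The extension to the unitalization `A = K·1 ⊕ A₊` of a bilinear operation `d` on `A₊`,
determined by `1 ⊳ x = 0`, `x ⊳ 1 = x` and `1 ⊳ 1 = 1`:
`(k·1 + a) ⊳ (l·1 + b) = k l · 1 + l a + a ⊳ b`. -/
noncomputable def uniExt (K : Type*) [Field K] {A : Type*} [NonUnitalRing A] [Module K A]
    [SMulCommClass K A A] [IsScalarTower K A A]
    (d : A →ₗ[K] A →ₗ[K] A) :
    Unitization K A →ₗ[K] Unitization K A →ₗ[K] Unitization K A :=
  LinearMap.mk₂ K
    (fun x y => Unitization.inl (x.fst * y.fst)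
        + Unitization.inr (y.fst • x.snd + d x.snd y.snd))
    (fun x x' y => by
      apply Unitization.ext <;> (simp [add_mul, smul_add, map_add]; try abel))
    (fun c x y => by
      refine Unitization.ext (by simp [mul_assoc]) ?_
      simp [smul_add, map_smul, smul_comm c])
    (fun x y y' => by
      apply Unitization.ext <;> (simp [mul_add, add_smul, map_add]; try abel))
    (fun c x y => by
      refine Unitization.ext (by simp; ring) ?_
      simp [smul_add, map_smul, mul_smul, smul_comm c])


open TensorProduct
set_option maxHeartbeats 1000000
set_option synthInstance.maxHeartbeats 400000

section uwordAux

attribute [local instance 100] LieRing.ofAssociativeRing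

variable (K : Type*) {L : Type*} [Field K] [LieRing L] [LieAlgebra K L]

/-- The word `ι x₁ ⋯ ι xₙ` in the universal enveloping algebra. -/
noncomputable def uword (w : List L) : UniversalEnvelopingAlgebra K L :=
  (w.map fun x => UniversalEnvelopingAlgebra.ι K x).prod

lemma uword_nil : uword K ([] : List L) = 1 := rfl

lemma uword_cons (x : L) (w : List L) :
    uword K (x :: w) = UniversalEnvelopingAlgebra.ι K x * uword K w := rfl

lemma uword_append (w₁ w₂ : List L) :
    uword K (w₁ ++ w₂) = uword K w₁ * uword K w₂ := by
  simp [uword, List.prod_append]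

lemma uword_concat (w : List L) (y : L) :
    uword K (w ++ [y]) = uword K w * UniversalEnvelopingAlgebra.ι K y := by
  simp [uword_append, uword]

lemma uword_singleton (x : L) :
    uword K [x] = UniversalEnvelopingAlgebra.ι K x := by
  simp [uword]

lemma adjoin_range_uea_ι_eq_top :
    Algebra.adjoin K
      (Set.range fun x : L => (UniversalEnvelopingAlgebra.ι K x :
        UniversalEnvelopingAlgebra K L)) = ⊤ := by
  set S := Algebra.adjoin K
      (Set.range fun x : L => (UniversalEnvelopingAlgebra.ι K x :
        UniversalEnvelopingAlgebra K L)) with hS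
  rw [eq_top_iff]
  rintro f -
  let j : L →ₗ⁅K⁆ S :=
    { toFun := fun x => ⟨UniversalEnvelopingAlgebra.ι K x, Algebra.subset_adjoin ⟨x, rfl⟩⟩
      map_add' := fun x y => Subtype.ext (by simp)
      map_smul' := fun c x => Subtype.ext (by simp)
      map_lie' := fun {x y} => Subtype.ext (by
        simp [LieRing.of_associative_ring_bracket]) }
  have key : S.val.comp (UniversalEnvelopingAlgebra.lift K j)
      = AlgHom.id K (UniversalEnvelopingAlgebra K L) := by
    apply UniversalEnvelopingAlgebra.hom_ext
    ext x
    simp [j, UniversalEnvelopingAlgebra.lift_ι_apply]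
  have : S.val ((UniversalEnvelopingAlgebra.lift K j) f) = f := by
    rw [← AlgHom.comp_apply, key]; rfl
  rw [← this]
  exact ((UniversalEnvelopingAlgebra.lift K j) f).2

lemma span_range_uword_eq_top :
    Submodule.span K (Set.range (uword K (L := L))) = ⊤ := by
  rw [eq_top_iff]
  have h1 : (1 : UniversalEnvelopingAlgebra K L)
      ∈ Submodule.span K (Set.range (uword K (L := L))) :=
    Submodule.subset_span ⟨[], rfl⟩
  have hmulc : ∀ a b : UniversalEnvelopingAlgebra K L,
      a ∈ Submodule.span K (Set.range (uword K (L := L))) →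
      b ∈ Submodule.span K (Set.range (uword K (L := L))) →
      a * b ∈ Submodule.span K (Set.range (uword K (L := L))) := by
    intro a b ha hb
    induction ha using Submodule.span_induction with
    | mem a ha =>
      obtain ⟨w₁, rfl⟩ := ha
      induction hb using Submodule.span_induction with
      | mem b hb =>
        obtain ⟨w₂, rfl⟩ := hb
        rw [← uword_append]
        exact Submodule.subset_span ⟨w₁ ++ w₂, rfl⟩
      | zero => simp
      | add b c _ _ hb hc => rw [mul_add]; exact Submodule.add_mem _ hb hc
      | smul c b _ hb => rw [mul_smul_comm]; exact Submodule.smul_mem _ _ hb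
    | zero => simp
    | add a c _ _ ha hc => rw [add_mul]; exact Submodule.add_mem _ ha hc
    | smul c a _ ha => rw [smul_mul_assoc]; exact Submodule.smul_mem _ _ ha
  have htop := adjoin_range_uea_ι_eq_top K (L := L)
  let T : Subalgebra K (UniversalEnvelopingAlgebra K L) :=
    Submodule.toSubalgebra _ h1 hmulc
  have hle : Algebra.adjoin K
      (Set.range fun x : L => (UniversalEnvelopingAlgebra.ι K x :
        UniversalEnvelopingAlgebra K L)) ≤ T := by
    apply Algebra.adjoin_le
    rintro _ ⟨x, rfl⟩
    exact Submodule.subset_span ⟨[x], uword_singleton K x⟩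
  rintro f -
  exact hle (htop ▸ trivial : f ∈ Algebra.adjoin K _)

/-- Induction principle: any property of elements of `U(L)` which is linear and holds for
all words holds everywhere. -/
lemma uword_induction {p : UniversalEnvelopingAlgebra K L → Prop}
    (hw : ∀ w : List L, p (uword K w))
    (hadd : ∀ a b, p a → p b → p (a + b))
    (hsmul : ∀ (c : K) a, p a → p (c • a)) (f : UniversalEnvelopingAlgebra K L) : p f := by
  have h0 : p 0 := by simpa using hsmul 0 (uword K []) (hw [])
  have hf : f ∈ Submodule.span K (Set.range (uword K (L := L))) := by
    rw [span_range_uword_eq_top]; trivial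
  exact Submodule.span_induction (fun x hx => by obtain ⟨w, rfl⟩ := hx; exact hw w)
    h0 (fun a b _ _ => hadd a b) (fun c a _ => hsmul c a) hf

end uwordAux

/-- Universal property of the Post-Hopf enveloping algebra: a suitable
linear map `φ` from a right Post-Lie algebra `(L, ⁅·,·⁆, m)` to a nonunital associative
algebra `A₊` (endowed with `d = ⊳`) extends uniquely to an algebra morphism
`Φ : U(L) → K·1 ⊕ A₊`, and `Φ` intertwines the extension `B` of `m` with the extension of
`d`, and satisfies the two right Post-Hopf identities. -/
theorem statement11 {K L : Type*} [Field K] [CharZero K] [LieRing L] [LieAlgebra K L]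
    (m : L →ₗ[K] L →ₗ[K] L) (hm : IsRightPostLie K m)
    -- the standard Hopf structure on U(L)
    (Δ : UniversalEnvelopingAlgebra K L →ₐ[K]
          UniversalEnvelopingAlgebra K L ⊗[K] UniversalEnvelopingAlgebra K L)
    (hΔ : ∀ x : L, Δ (UniversalEnvelopingAlgebra.ι K x)
        = UniversalEnvelopingAlgebra.ι K x ⊗ₜ[K] (1 : UniversalEnvelopingAlgebra K L)
          + (1 : UniversalEnvelopingAlgebra K L) ⊗ₜ[K] UniversalEnvelopingAlgebra.ι K x)
    (ε : UniversalEnvelopingAlgebra K L →ₐ[K] K)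
    (hε : ∀ x : L, ε (UniversalEnvelopingAlgebra.ι K x) = 0)
    -- the unique extension `B` of the Post-Lie product `m` to `U(L)`
    (B : UniversalEnvelopingAlgebra K L →ₗ[K]
          UniversalEnvelopingAlgebra K L →ₗ[K] UniversalEnvelopingAlgebra K L)
    (hagree : ∀ x y : L,
      B (UniversalEnvelopingAlgebra.ι K x) (UniversalEnvelopingAlgebra.ι K y)
        = UniversalEnvelopingAlgebra.ι K (m x y))
    (hcounit : ∀ f g, ε (B f g) = ε f * ε g)
    (hcomul : ∀ f g, Δ (B f g) = TensorProduct.map₂ B B (Δ f) (Δ g))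
    (hone : ∀ f, B f 1 = f)
    (hone' : ∀ f, B 1 f = ε f • (1 : UniversalEnvelopingAlgebra K L))
    (hword : ∀ f g (y : L), B f (g * UniversalEnvelopingAlgebra.ι K y)
        = B (B f g) (UniversalEnvelopingAlgebra.ι K y)
          - B f (B g (UniversalEnvelopingAlgebra.ι K y)))
    (hmul : ∀ f g u, B (f * g) u
        = TensorProduct.lift
            ((LinearMap.mul K (UniversalEnvelopingAlgebra K L)).compl₁₂ (B f) (B g)) (Δ u))
    (hBB : ∀ f g u, B (B f g) u
        = B f (TensorProduct.lift
            ((LinearMap.mul K (UniversalEnvelopingAlgebra K L)).compl₁₂ (B g) LinearMap.id)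
            (Δ u)))
    -- the target nonunital algebra `A₊` with its operation `d = ⊳` and the map `φ`
    {A : Type*} [NonUnitalRing A] [Module K A] [SMulCommClass K A A] [IsScalarTower K A A]
    (d : A →ₗ[K] A →ₗ[K] A) (φ : L →ₗ[K] A)
    (hφbracket : ∀ x y : L, φ ⁅x, y⁆ = φ x * φ y - φ y * φ x)
    (hφm : ∀ x y : L, φ (m x y) = d (φ x) (φ y))
    (hyp1 : ∀ x y : A, x ∈ NonUnitalAlgebra.adjoin K (Set.range φ) →
      y ∈ NonUnitalAlgebra.adjoin K (Set.range φ) → ∀ z ∈ Set.range φ,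
        d (x * y) z = d x z * y + x * d y z)
    (hyp2 : ∀ x y : A, x ∈ NonUnitalAlgebra.adjoin K (Set.range φ) →
      y ∈ NonUnitalAlgebra.adjoin K (Set.range φ) → ∀ z ∈ Set.range φ,
        d x (y * z) = d (d x y) z - d x (d y z)) :
    (∃! Φ : UniversalEnvelopingAlgebra K L →ₐ[K] Unitization K A,
      ∀ x : L, Φ (UniversalEnvelopingAlgebra.ι K x) = Unitization.inr (φ x))
    ∧ ∀ Φ : UniversalEnvelopingAlgebra K L →ₐ[K] Unitization K A,
        (∀ x : L, Φ (UniversalEnvelopingAlgebra.ι K x) = Unitization.inr (φ x)) →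
        (∀ f g, Φ (B f g) = uniExt K d (Φ f) (Φ g))
        ∧ (∀ f g u, uniExt K d (Φ f * Φ g) (Φ u)
            = TensorProduct.lift
                ((LinearMap.mul K (Unitization K A)).compl₁₂
                  (uniExt K d (Φ f)) (uniExt K d (Φ g)))
                (TensorProduct.map Φ.toLinearMap Φ.toLinearMap (Δ u)))
        ∧ (∀ f g u, uniExt K d (uniExt K d (Φ f) (Φ g)) (Φ u)
            = uniExt K d (Φ f)
                (TensorProduct.lift
                  ((LinearMap.mul K (Unitization K A)).compl₁₂
                    (uniExt K d (Φ g)) LinearMap.id)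
                  (TensorProduct.map Φ.toLinearMap Φ.toLinearMap (Δ u)))) := by
  classical
  constructor
  · -- existence and uniqueness of `Φ`
    letI : LieRing (Unitization K A) := LieRing.ofAssociativeRing
    let ℓ : L →ₗ⁅K⁆ Unitization K A :=
      { toFun := fun x => (Unitization.inr (φ x) : Unitization K A)
        map_add' := fun x y => by simp [Unitization.inr_add]
        map_smul' := fun c x => by simp [Unitization.inr_smul]
        map_lie' := fun {x y} => by
          apply Unitization.ext
          · simp [LieRing.of_associative_ring_bracket, sub_eq_add_neg,
              Unitization.fst_add, Unitization.fst_neg, Unitization.fst_mul]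
          · simp [LieRing.of_associative_ring_bracket, sub_eq_add_neg,
              Unitization.snd_add, Unitization.snd_neg, Unitization.snd_mul, hφbracket] }
    refine ⟨UniversalEnvelopingAlgebra.lift K ℓ,
      fun x => UniversalEnvelopingAlgebra.lift_ι_apply K ℓ x, ?_⟩
    intro Ψ hΨ
    apply UniversalEnvelopingAlgebra.hom_ext
    refine LieHom.ext fun x => ?_
    show Ψ (UniversalEnvelopingAlgebra.ι K x)
      = UniversalEnvelopingAlgebra.lift K ℓ (UniversalEnvelopingAlgebra.ι K x)
    rw [hΨ, UniversalEnvelopingAlgebra.lift_ι_apply]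
    rfl
  · intro Φ HΦ
    -- basic computation rules for `D := uniExt K d`
    have Dapp : ∀ u v : Unitization K A, uniExt K d u v
        = Unitization.inl (u.fst * v.fst)
          + Unitization.inr (v.fst • u.snd + d u.snd v.snd) := fun u v => rfl
    have Dfst : ∀ u v : Unitization K A, (uniExt K d u v).fst = u.fst * v.fst := by
      intro u v; rw [Dapp]; simp
    have Dsnd : ∀ u v : Unitization K A,
        (uniExt K d u v).snd = v.fst • u.snd + d u.snd v.snd := by
      intro u v; rw [Dapp]; simp
    have Done : ∀ u : Unitization K A, uniExt K d u 1 = u := by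
      intro u; apply Unitization.ext <;> simp [Dfst, Dsnd]
    have DInr : ∀ (u : Unitization K A) (z : A),
        uniExt K d u (Unitization.inr z) = Unitization.inr (d u.snd z) := by
      intro u z; apply Unitization.ext <;> simp [Dfst, Dsnd]
    -- membership facts
    have hφmem : ∀ x : L, φ x ∈ NonUnitalAlgebra.adjoin K (Set.range φ) :=
      fun x => NonUnitalAlgebra.subset_adjoin K ⟨x, rfl⟩
    have hsnd : ∀ f, (Φ f).snd ∈ NonUnitalAlgebra.adjoin K (Set.range φ) := by
      intro f
      induction f using uword_induction with
      | hw w =>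
        induction w with
        | nil =>
          rw [uword_nil, map_one, Unitization.snd_one]
          exact zero_mem _
        | cons x w ih =>
          rw [uword_cons, map_mul, HΦ, Unitization.snd_mul]
          simp only [Unitization.fst_inr, Unitization.snd_inr, zero_smul, zero_add]
          exact add_mem (SMulMemClass.smul_mem _ (hφmem x)) (mul_mem (hφmem x) ih)
      | hadd a b ha hb =>
        rw [map_add, Unitization.snd_add]; exact add_mem ha hb
      | hsmul c a ha =>
        rw [map_smul, Unitization.snd_smul]; exact SMulMemClass.smul_mem _ ha
    -- `D (· ⊳ (inr (φ x)))` is a derivation on elements whose `snd` lies in the adjoin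
    have Dderiv : ∀ u v : Unitization K A,
        u.snd ∈ NonUnitalAlgebra.adjoin K (Set.range φ) →
        v.snd ∈ NonUnitalAlgebra.adjoin K (Set.range φ) → ∀ x : L,
        uniExt K d (u * v) (Unitization.inr (φ x))
          = uniExt K d u (Unitization.inr (φ x)) * v
            + u * uniExt K d v (Unitization.inr (φ x)) := by
      intro u v hu hv x
      rw [DInr, DInr, DInr]
      apply Unitization.ext
      · simp [Unitization.fst_mul]
      · simp only [Unitization.snd_add, Unitization.snd_mul, Unitization.snd_inr,
          Unitization.fst_inr, Unitization.fst_mul, map_add, LinearMap.add_apply,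
          map_smul, LinearMap.smul_apply, zero_smul, add_zero, zero_add]
        rw [hyp1 u.snd v.snd hu hv (φ x) ⟨x, rfl⟩]
        abel
    have Dassoc : ∀ u v : Unitization K A,
        u.snd ∈ NonUnitalAlgebra.adjoin K (Set.range φ) →
        v.snd ∈ NonUnitalAlgebra.adjoin K (Set.range φ) → ∀ x : L,
        uniExt K d u (v * Unitization.inr (φ x))
          = uniExt K d (uniExt K d u v) (Unitization.inr (φ x))
            - uniExt K d u (uniExt K d v (Unitization.inr (φ x))) := by
      intro u v hu hv x
      apply Unitization.ext
      · simp [Dfst, Unitization.fst_mul, sub_eq_add_neg,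
          Unitization.fst_add, Unitization.fst_neg]
      · simp only [sub_eq_add_neg, Unitization.snd_add, Unitization.snd_neg, Dsnd, Dfst, Unitization.snd_mul,
          Unitization.fst_mul, Unitization.fst_inr, Unitization.snd_inr,
          map_add, LinearMap.add_apply, map_smul, LinearMap.smul_apply,
          zero_smul, add_zero, zero_add, mul_zero, smul_zero]
        rw [hyp2 u.snd v.snd hu hv (φ x) ⟨x, rfl⟩]
        abel
    -- `B (f·g) (UniversalEnvelopingAlgebra.ι K y)` expansion
    have hBι : ∀ (f g : UniversalEnvelopingAlgebra K L) (y : L),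
        B (f * g) (UniversalEnvelopingAlgebra.ι K y) = B f (UniversalEnvelopingAlgebra.ι K y) * g + f * B g (UniversalEnvelopingAlgebra.ι K y) := by
      intro f g y
      rw [hmul, hΔ, map_add, TensorProduct.lift.tmul, TensorProduct.lift.tmul]
      simp only [LinearMap.compl₁₂_apply, LinearMap.mul_apply', hone]
    -- Claim A : `Φ (B f (UniversalEnvelopingAlgebra.ι K y)) = D (Φ f) (Φ (UniversalEnvelopingAlgebra.ι K y))`
    have baseA : ∀ (y : L) (f : UniversalEnvelopingAlgebra K L),
        Φ (B f (UniversalEnvelopingAlgebra.ι K y)) = uniExt K d (Φ f) (Φ (UniversalEnvelopingAlgebra.ι K y)) := by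
      intro y f
      induction f using uword_induction with
      | hw w =>
        induction w with
        | nil =>
          rw [uword_nil, hone', hε, zero_smul, map_zero, map_one, HΦ]
          apply Unitization.ext
          · simp [Dfst]
          · simp [Dsnd, Unitization.snd_one]
        | cons x w ih =>
          simp only [uword_cons, hBι, hagree, map_add, map_mul, HΦ, ih]
          rw [Dderiv (Unitization.inr (φ x)) (Φ (uword K w))
              (by simpa using hφmem x) (hsnd _) y,
            DInr (Unitization.inr (φ x)), Unitization.snd_inr, ← hφm]
      | hadd a b ha hb => simp only [map_add, LinearMap.add_apply, ha, hb]
      | hsmul c a ha => simp only [map_smul, LinearMap.smul_apply, ha]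
    -- the length filtration
    have Fword : ∀ (n : ℕ) (w : List L), w.length ≤ n →
        uword K w ∈ Submodule.span K (uword K (L := L) '' {w : List L | w.length ≤ n}) :=
      fun n w hw => Submodule.subset_span ⟨w, hw, rfl⟩
    have Fmono : ∀ {n n' : ℕ}, n ≤ n' →
        Submodule.span K (uword K (L := L) '' {w : List L | w.length ≤ n})
          ≤ Submodule.span K (uword K (L := L) '' {w : List L | w.length ≤ n'}) :=
      fun h => Submodule.span_mono (Set.image_mono fun w hw => le_trans hw h)
    have FmulL : ∀ (x : L) (n : ℕ) (g : UniversalEnvelopingAlgebra K L),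
        g ∈ Submodule.span K (uword K (L := L) '' {w : List L | w.length ≤ n}) →
        UniversalEnvelopingAlgebra.ι K x * g ∈ Submodule.span K (uword K (L := L) '' {w : List L | w.length ≤ n + 1}) := by
      intro x n g hg
      induction hg using Submodule.span_induction with
      | mem g hg =>
        obtain ⟨w, hw, rfl⟩ := hg
        rw [← uword_cons]
        exact Fword _ _ (by simpa using Nat.succ_le_succ hw)
      | zero => rw [mul_zero]; exact Submodule.zero_mem _
      | add a b _ _ ha hb => rw [mul_add]; exact Submodule.add_mem _ ha hb
      | smul c a _ ha => rw [mul_smul_comm]; exact Submodule.smul_mem _ _ ha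
    have hBmem : ∀ (w : List L) (y : L),
        B (uword K w) (UniversalEnvelopingAlgebra.ι K y)
          ∈ Submodule.span K (uword K (L := L) '' {w' : List L | w'.length ≤ w.length}) := by
      intro w y
      induction w with
      | nil =>
        rw [uword_nil, hone', hε, zero_smul]
        exact Submodule.zero_mem _
      | cons x w ih =>
        rw [uword_cons, hBι, hagree]
        refine Submodule.add_mem _ ?_ (FmulL x _ _ ih)
        rw [← uword_cons]
        exact Fword _ _ (by simp)
    -- main induction for the first identity
    have mainF : ∀ (n : ℕ) (g : UniversalEnvelopingAlgebra K L),
        g ∈ Submodule.span K (uword K (L := L) '' {w : List L | w.length ≤ n}) →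
        ∀ f, Φ (B f g) = uniExt K d (Φ f) (Φ g) := by
      intro n
      induction n with
      | zero =>
        intro g hg f
        induction hg using Submodule.span_induction with
        | mem g hg =>
          obtain ⟨w, hw, rfl⟩ := hg
          have hw0 : w = [] := List.length_eq_zero_iff.mp (Nat.le_zero.mp hw)
          subst hw0
          rw [uword_nil, hone, map_one, Done]
        | zero => rw [map_zero, map_zero, map_zero]
        | add a b _ _ ha hb => simp only [map_add, ha, hb]
        | smul c a _ ha => simp only [map_smul, ha]
      | succ n ih =>
        intro g hg f
        induction hg using Submodule.span_induction with
        | mem g hg =>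
          obtain ⟨w, hw, rfl⟩ := hg
          induction w using List.reverseRecOn with
          | nil => rw [uword_nil, hone, map_one, Done]
          | append_singleton w y _ =>
            have hwn : w.length ≤ n := by simpa using hw
            rw [uword_concat, hword, map_sub,
              baseA y (B f (uword K w)),
              ih (uword K w) (Fword n w hwn) f,
              ih (B (uword K w) (UniversalEnvelopingAlgebra.ι K y)) (Fmono hwn (hBmem w y)) f,
              baseA y (uword K w), HΦ y, map_mul, HΦ y,
              ← Dassoc (Φ f) (Φ (uword K w)) (hsnd f) (hsnd _) y]
        | zero => rw [map_zero, map_zero, map_zero]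
        | add a b _ _ ha hb => simp only [map_add, ha, hb]
        | smul c a _ ha => simp only [map_smul, ha]
    have id1 : ∀ f g, Φ (B f g) = uniExt K d (Φ f) (Φ g) := by
      intro f g
      induction g using uword_induction with
      | hw w => exact mainF w.length (uword K w) (Fword _ _ le_rfl) f
      | hadd a b ha hb => simp only [map_add, ha, hb]
      | hsmul c a ha => simp only [map_smul, ha]
    refine ⟨id1, ?_, ?_⟩
    · intro f g u
      rw [← map_mul, ← id1, hmul]
      have key : ∀ t : UniversalEnvelopingAlgebra K L ⊗[K] UniversalEnvelopingAlgebra K L,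
          Φ (TensorProduct.lift
            ((LinearMap.mul K (UniversalEnvelopingAlgebra K L)).compl₁₂ (B f) (B g)) t)
            = TensorProduct.lift
                ((LinearMap.mul K (Unitization K A)).compl₁₂
                  (uniExt K d (Φ f)) (uniExt K d (Φ g)))
                (TensorProduct.map Φ.toLinearMap Φ.toLinearMap t) := by
        intro t
        induction t using TensorProduct.induction_on with
        | zero => simp
        | tmul a b =>
          simp only [TensorProduct.lift.tmul, TensorProduct.map_tmul,
            LinearMap.compl₁₂_apply, LinearMap.mul_apply', map_mul,
            AlgHom.toLinearMap_apply, id1]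
        | add a b ha hb => simp only [map_add, ha, hb]
      exact key (Δ u)
    · intro f g u
      rw [← id1 f g, ← id1 (B f g) u, hBB, id1 f]
      congr 1
      have key : ∀ t : UniversalEnvelopingAlgebra K L ⊗[K] UniversalEnvelopingAlgebra K L,
          Φ (TensorProduct.lift
            ((LinearMap.mul K (UniversalEnvelopingAlgebra K L)).compl₁₂ (B g) LinearMap.id) t)
            = TensorProduct.lift
                ((LinearMap.mul K (Unitization K A)).compl₁₂
                  (uniExt K d (Φ g)) LinearMap.id)
                (TensorProduct.map Φ.toLinearMap Φ.toLinearMap t) := by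
        intro t
        induction t using TensorProduct.induction_on with
        | zero => simp
        | tmul a b =>
          simp only [TensorProduct.lift.tmul, TensorProduct.map_tmul,
            LinearMap.compl₁₂_apply, LinearMap.mul_apply', map_mul,
            AlgHom.toLinearMap_apply, LinearMap.id_apply, id1]
        | add a b ha hb => simp only [map_add, ha, hb]
      exact key (Δ u)
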